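/- Lipschitz propagation through one step of the value-function recursion: under the stated hypotheses, the function V'(x) := max( g(x), 𝔼[V(ξ^x)] ) is well defined and satisfies |V'(x) − V'(y)| ≤ 2·K_g·‖x − y‖ + K_V·(𝔼[‖ξ^x − ξ^y‖²])^{1/2} for all x, y ∈ ℝ^D; in particular, if (𝔼[‖ξ^x − ξ^y‖²])^{1/2} ≤ L·‖x − y‖ for all x, y, then V' is (2·K_g + K_V·L)-Lipschitz. -/

import Mathlib

open MeasureTheory

/-- Lipschitz propagation through one step of the value-function recursion: with
`g` `Kg`-Lipschitz, `V` `KV`-Lipschitz and `ξ x ∈ L²` for every `x`, the function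
`V' x = max (g x) (𝔼[V (ξ x)])` is well defined (each `V (ξ x)` is integrable) and
`|V' x − V' y| ≤ 2·Kg·‖x − y‖ + KV·(𝔼‖ξ x − ξ y‖²)^{1/2}`; in particular, if
`(𝔼‖ξ x − ξ y‖²)^{1/2} ≤ L·‖x − y‖` for all `x, y`, then `V'` is
`(2·Kg + KV·L)`-Lipschitz. -/
theorem lipschitz_value_recursion_step
    {Ω : Type*} [MeasurableSpace Ω] (P : Measure Ω) [IsProbabilityMeasure P]
    (D : ℕ) (hD : 1 ≤ D)
    (g V : EuclideanSpace ℝ (Fin D) → ℝ) (Kg KV : ℝ) (hKg : 0 ≤ Kg) (hKV : 0 ≤ KV)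
    (hg : ∀ x y, |g x - g y| ≤ Kg * ‖x - y‖)
    (hV : ∀ x y, |V x - V y| ≤ KV * ‖x - y‖)
    (ξ : EuclideanSpace ℝ (Fin D) → Ω → EuclideanSpace ℝ (Fin D))
    (hξmeas : Measurable (Function.uncurry ξ))
    (hξ2 : ∀ x, MemLp (ξ x) 2 P) :
    (∀ x, Integrable (fun ω => V (ξ x ω)) P) ∧
    (∀ x y, |max (g x) (∫ ω, V (ξ x ω) ∂P) - max (g y) (∫ ω, V (ξ y ω) ∂P)|
        ≤ 2 * Kg * ‖x - y‖ + KV * Real.sqrt (∫ ω, ‖ξ x ω - ξ y ω‖ ^ 2 ∂P)) ∧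
    (∀ L : ℝ, (∀ x y, Real.sqrt (∫ ω, ‖ξ x ω - ξ y ω‖ ^ 2 ∂P) ≤ L * ‖x - y‖) →
      ∀ x y, |max (g x) (∫ ω, V (ξ x ω) ∂P) - max (g y) (∫ ω, V (ξ y ω) ∂P)|
        ≤ (2 * Kg + KV * L) * ‖x - y‖) := by
  -- V is Lipschitz, hence continuous
  have hVlip : LipschitzWith (Real.toNNReal KV) V := by
    refine LipschitzWith.of_dist_le_mul fun a b => ?_
    rw [Real.dist_eq, dist_eq_norm, Real.coe_toNNReal KV hKV]
    exact hV a b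
  have hVcont : Continuous V := hVlip.continuous
  have hξxmeas : ∀ x, Measurable (ξ x) := fun x =>
    hξmeas.comp (measurable_prodMk_left)
  -- integrability of V ∘ ξ x
  have hInt : ∀ x, Integrable (fun ω => V (ξ x ω)) P := by
    intro x
    have h1 : MemLp (ξ x) 1 P := (hξ2 x).mono_exponent (by norm_num)
    have hix : Integrable (ξ x) P := memLp_one_iff_integrable.mp h1
    refine Integrable.mono' ((integrable_const |V 0|).add (hix.norm.const_mul KV))
      ((hVcont.measurable.comp (hξxmeas x)).aestronglyMeasurable) ?_
    filter_upwards with ω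
    have := hV (ξ x ω) 0
    simp only [sub_zero] at this
    calc ‖V (ξ x ω)‖ = |V (ξ x ω) - V 0 + V 0| := by rw [Real.norm_eq_abs]; ring_nf
      _ ≤ |V (ξ x ω) - V 0| + |V 0| := abs_add_le _ _
      _ ≤ KV * ‖ξ x ω‖ + |V 0| := by linarith
      _ = |V 0| + KV * ‖ξ x ω‖ := by ring
  have key : ∀ x y, |max (g x) (∫ ω, V (ξ x ω) ∂P) - max (g y) (∫ ω, V (ξ y ω) ∂P)|
      ≤ 2 * Kg * ‖x - y‖ + KV * Real.sqrt (∫ ω, ‖ξ x ω - ξ y ω‖ ^ 2 ∂P) := by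
    intro x y
    -- key estimate on the integral difference via Cauchy-Schwarz
    have hmemd : MemLp (fun ω => ‖ξ x ω - ξ y ω‖) (ENNReal.ofReal 2) P := by
      have h2 : (ENNReal.ofReal 2) = 2 := by norm_num
      rw [h2]
      exact ((hξ2 x).sub (hξ2 y)).norm
    have hCS : ∫ ω, ‖ξ x ω - ξ y ω‖ ∂P ≤ Real.sqrt (∫ ω, ‖ξ x ω - ξ y ω‖ ^ 2 ∂P) := by
      have hHold := integral_mul_le_Lp_mul_Lq_of_nonneg (μ := P)
        (Real.holderConjugate_iff.mpr ⟨by norm_num, by norm_num⟩ : Real.HolderConjugate 2 2)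
        (f := fun ω => ‖ξ x ω - ξ y ω‖) (g := fun _ => (1 : ℝ))
        (Filter.Eventually.of_forall fun ω => norm_nonneg _)
        (Filter.Eventually.of_forall fun ω => zero_le_one)
        hmemd (memLp_const 1)
      simp only [mul_one] at hHold
      have he : ∫ ω, ‖ξ x ω - ξ y ω‖ ^ (2:ℝ) ∂P = ∫ ω, ‖ξ x ω - ξ y ω‖ ^ 2 ∂P := by
        refine integral_congr_ae (Filter.Eventually.of_forall fun ω => ?_)
        show ‖ξ x ω - ξ y ω‖ ^ (2:ℝ) = ‖ξ x ω - ξ y ω‖ ^ 2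
        rw [← Real.rpow_natCast ‖ξ x ω - ξ y ω‖ 2]
        norm_num
      have h2 : (∫ _ω : Ω, (1:ℝ) ^ (2:ℝ) ∂P) ^ (1/(2:ℝ)) = 1 := by
        simp [Real.one_rpow]
      rw [h2, mul_one, he] at hHold
      rw [Real.sqrt_eq_rpow]
      exact hHold
    have hIntDiff : |(∫ ω, V (ξ x ω) ∂P) - ∫ ω, V (ξ y ω) ∂P|
        ≤ KV * Real.sqrt (∫ ω, ‖ξ x ω - ξ y ω‖ ^ 2 ∂P) := by
      rw [← integral_sub (hInt x) (hInt y)]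
      have hib : Integrable (fun ω => ‖ξ x ω - ξ y ω‖) P := by
        have h1 : MemLp (fun ω => ξ x ω - ξ y ω) 1 P :=
          ((hξ2 x).sub (hξ2 y)).mono_exponent (by norm_num)
        exact (memLp_one_iff_integrable.mp h1).norm
      calc |∫ ω, (V (ξ x ω) - V (ξ y ω)) ∂P|
          ≤ ∫ ω, |V (ξ x ω) - V (ξ y ω)| ∂P := by
            rw [← Real.norm_eq_abs]
            exact norm_integral_le_integral_norm _
        _ ≤ ∫ ω, KV * ‖ξ x ω - ξ y ω‖ ∂P := by
            refine integral_mono_of_nonneg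
              (Filter.Eventually.of_forall fun ω => abs_nonneg _)
              (hib.const_mul KV)
              (Filter.Eventually.of_forall fun ω => hV _ _)
        _ = KV * ∫ ω, ‖ξ x ω - ξ y ω‖ ∂P := integral_const_mul KV _
        _ ≤ KV * Real.sqrt (∫ ω, ‖ξ x ω - ξ y ω‖ ^ 2 ∂P) :=
            mul_le_mul_of_nonneg_left hCS hKV
    calc |max (g x) (∫ ω, V (ξ x ω) ∂P) - max (g y) (∫ ω, V (ξ y ω) ∂P)|
        ≤ max |g x - g y| |(∫ ω, V (ξ x ω) ∂P) - ∫ ω, V (ξ y ω) ∂P| :=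
          abs_max_sub_max_le_max _ _ _ _
      _ ≤ 2 * Kg * ‖x - y‖ + KV * Real.sqrt (∫ ω, ‖ξ x ω - ξ y ω‖ ^ 2 ∂P) := by
          refine max_le ?_ ?_
          · have := hg x y
            have hs : 0 ≤ Real.sqrt (∫ ω, ‖ξ x ω - ξ y ω‖ ^ 2 ∂P) := Real.sqrt_nonneg _
            nlinarith [norm_nonneg (x - y)]
          · have h0 : (0:ℝ) ≤ 2 * Kg * ‖x - y‖ := by positivity
            linarith [hIntDiff]
  refine ⟨hInt, key, ?_⟩
  intro L hL x y
  calc |max (g x) (∫ ω, V (ξ x ω) ∂P) - max (g y) (∫ ω, V (ξ y ω) ∂P)|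
      ≤ 2 * Kg * ‖x - y‖ + KV * Real.sqrt (∫ ω, ‖ξ x ω - ξ y ω‖ ^ 2 ∂P) := key x y
    _ ≤ 2 * Kg * ‖x - y‖ + KV * (L * ‖x - y‖) :=
        add_le_add_right (mul_le_mul_of_nonneg_left (hL x y) hKV) _
    _ = (2 * Kg + KV * L) * ‖x - y‖ := by ring
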